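/- Let $L$ be the line bundle over the groupoid of germs $\G$ whose fiber over $[s,x]$ is the quotient of $\{(a,s',x): [s',x]=[s,x],\ a\in\A_{s'}\}$ by the equivalence relation $\sim$. For $\gamma=[s,x]\in\G$ and $a\in\A_s$ with $(a^*a)(x)>0$, every element of the fiber $L_\gamma$ is a unique scalar multiple of $[a,s,x]$; explicitly, for $b\in\A_s$, $[b,s,x]=\lambda\cdot[a,s,x]$ with $\lambda=(a^*b)(x)/(a^*a)(x)$. Hence $L_\gamma$ is one-dimensional, and $\lambda\mapsto\lambda[a,s,x]/\sqrt{(a^*a)(x)}$ is an isometric isomorphism $\mathbb{C}\to L_\gamma$. -/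

import Mathlib

/-- An inverse semigroup: a semigroup with an involution `star` such that `s (star s) s = s`,
`(star s) s (star s) = star s`, and idempotents commute (this forces `star s` to be the
unique generalized inverse of `s`). -/
class InverseSemigroup (S : Type*) extends Semigroup S, Star S where
  mul_star_mul : ∀ s : S, s * star s * s = s
  star_mul_star : ∀ s : S, star s * s * star s = star s
  idem_comm : ∀ e f : S, e * e = e → f * f = f → e * f = f * e

/-- The natural partial order on an inverse semigroup: `s ≤ t` iff `s = t (star s) s`. -/
def ISle {S : Type*} [InverseSemigroup S] (s t : S) : Prop := t * (star s * s) = s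

/-- A (concrete) Fell bundle over an inverse semigroup `S`: a family of closed subspaces
`fib s` of a C*-algebra `A`, with `fib s * fib t ⊆ fib (s t)`, `(fib s)* ⊆ fib (star s)`,
and `fib s ⊆ fib t` whenever `s ≤ t`.  (The fibers are thus Banach spaces with a
bilinear associative multiplication `𝒜ₛ × 𝒜ₜ → 𝒜ₛₜ`, a conjugate-linear involution
`𝒜ₛ → 𝒜ₛ*`, isometric inclusions, and the C*-identities hold in `A`.) -/
structure FellBundle (S : Type*) [InverseSemigroup S] (A : Type*)
    [NormedRing A] [StarRing A] [NormedAlgebra ℂ A] where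
  fib : S → Submodule ℂ A
  isClosed_fib : ∀ s, IsClosed (fib s : Set A)
  mul_mem : ∀ {s t : S} {a b : A}, a ∈ fib s → b ∈ fib t → a * b ∈ fib (s * t)
  star_mem : ∀ {s : S} {a : A}, a ∈ fib s → star a ∈ fib (star s)
  incl : ∀ {s t : S}, ISle s t → fib s ≤ fib t

variable {S : Type*} [InverseSemigroup S]
variable {A : Type*} [NormedRing A] [StarRing A] [CStarRing A]
  [NormedAlgebra ℂ A] [StarModule ℂ A] [CompleteSpace A]

/-- A Fell bundle is semi-abelian if each fiber over an idempotent is commutative. -/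
def FellBundle.SemiAbelian (𝓑 : FellBundle S A) : Prop :=
  ∀ e : S, e * e = e → ∀ a b : A, a ∈ 𝓑.fib e → b ∈ 𝓑.fib e → a * b = b * a

/-- A Fell bundle is saturated if `fib (s t)` is the closed linear span of
`fib s * fib t`. -/
def FellBundle.Saturated (𝓑 : FellBundle S A) : Prop :=
  ∀ s t : S, (𝓑.fib (s * t) : Set A) ⊆
    closure (↑(Submodule.span ℂ {x : A | ∃ a ∈ 𝓑.fib s, ∃ b ∈ 𝓑.fib t, x = a * b}) : Set A)

/-- The "restriction to the idempotent semilattice" part of the bundle: the closed linear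
span of the fibers over idempotents, a concrete model for `C*(𝓔)`. -/
def FellBundle.EPart (𝓑 : FellBundle S A) : Set A :=
  closure (↑(Submodule.span ℂ (⋃ e ∈ {e : S | e * e = e}, (𝓑.fib e : Set A))) : Set A)

/-- The open support `𝒰ₑ ⊆ X` of the ideal `𝒜ₑ = C₀(𝒰ₑ)`, expressed via the Gelfand
transform `val` of the idempotent part. -/
def FellBundle.U (𝓑 : FellBundle S A) {X : Type*} (val : A → X → ℂ) (e : S) : Set X :=
  {x : X | ∃ b ∈ 𝓑.fib e, val b x ≠ 0}

/-- The equivalence relation of Definition 3.9 on triples `(a, s, x)`: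
`(a,s,x) ∼ (a',s',x')` iff `x = x'` and there are an idempotent `e` and `b ∈ 𝒜ₑ` with
`b(x) ≠ 0`, `s e = s' e` and `a b ≡ₓ a' b`.  Its classes are the elements of the Fell
line bundle `L` over the groupoid of germs `𝒢`. -/
def germRelTrip {S : Type*} [InverseSemigroup S] {A : Type*} [NormedRing A] [StarRing A]
    [NormedAlgebra ℂ A] (𝓑 : FellBundle S A) {X : Type*} (val : A → X → ℂ) :
    (A × S × X) → (A × S × X) → Prop :=
  fun p q => p.2.2 = q.2.2 ∧ ∃ (e : S) (b : A), e * e = e ∧ b ∈ 𝓑.fib e ∧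
    val b p.2.2 ≠ 0 ∧ p.2.1 * e = q.2.1 * e ∧
    val (star (p.1 * b - q.1 * b) * (p.1 * b - q.1 * b)) p.2.2 = 0

/-- Let `L` be the line bundle over the groupoid of germs `𝒢` whose
fiber over `γ = [s,x]` is the set of classes `[b,t,y]` with `[t,y] = [s,x]` modulo `∼`.
For `a ∈ 𝒜ₛ` with `(a*a)(x) > 0`: every element `[b,t,x]` of the fiber `L_γ` is a unique
scalar multiple of `[a,s,x]`; explicitly, for `b ∈ 𝒜ₛ`, `[b,s,x] = λ·[a,s,x]` with
`λ = (a*b)(x)/(a*a)(x)`.  Hence `L_γ` is one-dimensional and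
`λ ↦ λ[a,s,x]/√((a*a)(x))` is an isometric isomorphism `ℂ → L_γ` (the norm of `[b,s,x]`
being `√((b*b)(x))`). -/
private lemma isg_gi_unique {x y z : S}
    (hxy : x * y * x = x) (hyx : y * x * y = y)
    (hxz : x * z * x = x) (hzx : z * x * z = z) : y = z := by
  have hyx_i : (y * x) * (y * x) = y * x := by
    calc (y * x) * (y * x) = (y * x * y) * x := by simp only [mul_assoc]
      _ = y * x := by rw [hyx]
  have hzx_i : (z * x) * (z * x) = z * x := by
    calc (z * x) * (z * x) = (z * x * z) * x := by simp only [mul_assoc]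
      _ = z * x := by rw [hzx]
  have hxy_i : (x * y) * (x * y) = x * y := by
    calc (x * y) * (x * y) = x * (y * x * y) := by simp only [mul_assoc]
      _ = x * y := by rw [hyx]
  have hxz_i : (x * z) * (x * z) = x * z := by
    calc (x * z) * (x * z) = x * (z * x * z) := by simp only [mul_assoc]
      _ = x * z := by rw [hzx]
  have h1 : y = z * x * y := by
    calc y = y * x * y := hyx.symm
      _ = y * (x * z * x) * y := by rw [hxz]
      _ = ((y * x) * (z * x)) * y := by simp only [mul_assoc]
      _ = ((z * x) * (y * x)) * y := by rw [InverseSemigroup.idem_comm _ _ hyx_i hzx_i]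
      _ = z * x * (y * x * y) := by simp only [mul_assoc]
      _ = z * x * y := by rw [hyx]
  have h2 : z = z * (x * y) := by
    calc z = z * x * z := hzx.symm
      _ = z * (x * y * x) * z := by rw [hxy]
      _ = z * ((x * y) * (x * z)) := by simp only [mul_assoc]
      _ = z * ((x * z) * (x * y)) := by rw [InverseSemigroup.idem_comm _ _ hxy_i hxz_i]
      _ = (z * x * z) * (x * y) := by simp only [mul_assoc]
      _ = z * (x * y) := by rw [hzx]
  calc y = z * x * y := h1
    _ = z * (x * y) := by rw [mul_assoc]
    _ = z := h2.symm

private lemma isg_e_idem (s : S) : (star s * s) * (star s * s) = star s * s := by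
  calc (star s * s) * (star s * s) = (star s * s * star s) * s := by simp only [mul_assoc]
    _ = star s * s := by rw [InverseSemigroup.star_mul_star]

private lemma isg_f_idem (s : S) : (s * star s) * (s * star s) = s * star s := by
  calc (s * star s) * (s * star s) = (s * star s * s) * star s := by simp only [mul_assoc]
    _ = s * star s := by rw [InverseSemigroup.mul_star_mul]

private lemma isg_s_mul_e (s : S) : s * (star s * s) = s := by
  rw [← mul_assoc]; exact InverseSemigroup.mul_star_mul s

private lemma isg_star_idem {e : S} (he : e * e = e) : star e = e :=
  isg_gi_unique (InverseSemigroup.mul_star_mul e) (InverseSemigroup.star_mul_star e)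
    (by rw [he, he]) (by rw [he, he])

private lemma isg_star_mul (s t : S) : star (s * t) = star t * star s := by
  have hts : (t * star t) * (t * star t) = t * star t := isg_f_idem t
  have hss : (star s * s) * (star s * s) = star s * s := isg_e_idem s
  refine isg_gi_unique (InverseSemigroup.mul_star_mul (s*t))
    (InverseSemigroup.star_mul_star (s*t)) ?_ ?_
  · calc s * t * (star t * star s) * (s * t)
        = s * ((t * star t) * (star s * s)) * t := by simp only [mul_assoc]
      _ = s * ((star s * s) * (t * star t)) * t := by
          rw [InverseSemigroup.idem_comm _ _ hts hss]
      _ = (s * star s * s) * (t * star t * t) := by simp only [mul_assoc]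
      _ = s * t := by rw [InverseSemigroup.mul_star_mul, InverseSemigroup.mul_star_mul]
  · calc (star t * star s) * (s * t) * (star t * star s)
        = star t * ((star s * s) * (t * star t)) * star s := by simp only [mul_assoc]
      _ = star t * ((t * star t) * (star s * s)) * star s := by
          rw [InverseSemigroup.idem_comm _ _ hss hts]
      _ = (star t * t * star t) * (star s * s * star s) := by simp only [mul_assoc]
      _ = star t * star s := by
          rw [InverseSemigroup.star_mul_star, InverseSemigroup.star_mul_star]

private lemma isg_idem_mul {e f : S} (he : e * e = e) (hf : f * f = f) :
    (e * f) * (e * f) = e * f := by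
  calc (e * f) * (e * f) = e * (f * e) * f := by simp only [mul_assoc]
    _ = e * (e * f) * f := by rw [InverseSemigroup.idem_comm _ _ hf he]
    _ = (e * e) * (f * f) := by simp only [mul_assoc]
    _ = e * f := by rw [he, hf]

private lemma isg_isle (s e : S) (he : e * e = e) : ISle (s * e) s := by
  show s * (star (s * e) * (s * e)) = s * e
  rw [isg_star_mul, isg_star_idem he]
  calc s * ((e * star s) * (s * e))
      = s * ((e * (star s * s)) * e) := by simp only [mul_assoc]
    _ = s * (((star s * s) * e) * e) := by
        rw [InverseSemigroup.idem_comm _ _ he (isg_e_idem s)]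
    _ = (s * (star s * s)) * (e * e) := by simp only [mul_assoc]
    _ = s * e := by rw [isg_s_mul_e, he]

private lemma isg_selfadj_sq {T : A} (hsT : star T = T) (hTT : T * T = 0) : T = 0 := by
  have h := CStarRing.norm_star_mul_self (x := T)
  rw [hsT, hTT, norm_zero] at h
  exact norm_eq_zero.mp (mul_self_eq_zero.mp h.symm)

private lemma P_swap (𝓑 : FellBundle S A) (hsab : 𝓑.SemiAbelian) {s : S} {p q r t u v : A}
    (hq : q ∈ 𝓑.fib s) (hr : r ∈ 𝓑.fib s) (ht : t ∈ 𝓑.fib s) (hu : u ∈ 𝓑.fib s) :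
    (star p * q) * ((star r * t) * (star u * v)) = (star p * t) * ((star u * q) * (star r * v)) := by
  have hcomm : (q * star r) * (t * star u) = (t * star u) * (q * star r) :=
    hsab (s * star s) (isg_f_idem s) _ _ (𝓑.mul_mem hq (𝓑.star_mem hr))
      (𝓑.mul_mem ht (𝓑.star_mem hu))
  calc (star p * q) * ((star r * t) * (star u * v))
      = star p * (((q * star r) * (t * star u)) * v) := by simp only [mul_assoc]
    _ = star p * (((t * star u) * (q * star r)) * v) := by rw [hcomm]
    _ = (star p * t) * ((star u * q) * (star r * v)) := by simp only [mul_assoc]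

private lemma key_lemma (𝓑 : FellBundle S A) (hsab : 𝓑.SemiAbelian) {s : S} {a b : A}
    (ha : a ∈ 𝓑.fib s) (hb : b ∈ 𝓑.fib s) :
    (star a * a) * (star b * b) = (star a * b) * (star b * a) := by
  have he := isg_e_idem s
  have maa : star a * a ∈ 𝓑.fib (star s * s) := 𝓑.mul_mem (𝓑.star_mem ha) ha
  have mab : star a * b ∈ 𝓑.fib (star s * s) := 𝓑.mul_mem (𝓑.star_mem ha) hb
  have mbb : star b * b ∈ 𝓑.fib (star s * s) := 𝓑.mul_mem (𝓑.star_mem hb) hb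
  have ecomm : ∀ {m n : A}, m ∈ 𝓑.fib (star s * s) → n ∈ 𝓑.fib (star s * s) → m * n = n * m :=
    fun hm hn => hsab _ he _ _ hm hn
  have h1 : ((star a * b) * (star b * a) - (star a * a) * (star b * b)) * (star a * b) = 0 := by
    rw [sub_mul]
    have e1 : ((star a * b) * (star b * a)) * (star a * b)
        = (star a * a) * ((star a * b) * (star b * b)) := by
      rw [mul_assoc]; exact P_swap 𝓑 hsab hb hb ha ha
    have e2 : ((star a * a) * (star b * b)) * (star a * b)
        = (star a * a) * ((star a * b) * (star b * b)) := by
      rw [mul_assoc, ecomm mbb mab]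
    rw [e1, e2, sub_self]
  have h2 : ((star a * b) * (star b * a) - (star a * a) * (star b * b)) * (star a * a) = 0 := by
    rw [sub_mul]
    have e1 : ((star a * b) * (star b * a)) * (star a * a)
        = (star a * a) * ((star a * b) * (star b * a)) := by
      rw [mul_assoc]; exact P_swap 𝓑 hsab hb hb ha ha
    have e2 : ((star a * a) * (star b * b)) * (star a * a)
        = (star a * a) * ((star a * b) * (star b * a)) := by
      rw [mul_assoc]
      calc (star a * a) * ((star b * b) * (star a * a))
          = (star a * b) * ((star a * a) * (star b * a)) := P_swap 𝓑 hsab ha hb hb ha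
        _ = ((star a * b) * (star a * a)) * (star b * a) := (mul_assoc _ _ _).symm
        _ = ((star a * a) * (star a * b)) * (star b * a) := by rw [ecomm mab maa]
        _ = (star a * a) * ((star a * b) * (star b * a)) := mul_assoc _ _ _
    rw [e1, e2, sub_self]
  have hsT : star ((star a * b) * (star b * a) - (star a * a) * (star b * b))
      = (star a * b) * (star b * a) - (star a * a) * (star b * b) := by
    simp only [star_sub, star_mul, star_star]
    rw [ecomm mbb maa]
  have hTT : ((star a * b) * (star b * a) - (star a * a) * (star b * b)) *
      ((star a * b) * (star b * a) - (star a * a) * (star b * b)) = 0 := by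
    rw [mul_sub,
      ← mul_assoc ((star a * b) * (star b * a) - (star a * a) * (star b * b))
        (star a * b) (star b * a),
      ← mul_assoc ((star a * b) * (star b * a) - (star a * a) * (star b * b))
        (star a * a) (star b * b),
      h1, h2, zero_mul, zero_mul, sub_zero]
  have h0 := isg_selfadj_sq hsT hTT
  exact (sub_eq_zero.mp h0).symm

theorem stmt_15 (𝓑 : FellBundle S A) (hsat : 𝓑.Saturated) (hsab : 𝓑.SemiAbelian)
    {X : Type*} (val : A → X → ℂ)
    (hval_add : ∀ {e : S} {a b : A}, e * e = e → a ∈ 𝓑.fib e → b ∈ 𝓑.fib e →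
      ∀ x, val (a + b) x = val a x + val b x)
    (hval_smul : ∀ {e : S} {a : A} (c : ℂ), e * e = e → a ∈ 𝓑.fib e →
      ∀ x, val (c • a) x = c * val a x)
    (hval_mul : ∀ {e f : S} {a b : A}, e * e = e → f * f = f → a ∈ 𝓑.fib e → b ∈ 𝓑.fib f →
      ∀ x, val (a * b) x = val a x * val b x)
    (hval_star : ∀ {e : S} {a : A}, e * e = e → a ∈ 𝓑.fib e →
      ∀ x, val (star a) x = (starRingEnd ℂ) (val a x))
    (hval_inj : ∀ {e : S} {a b : A}, e * e = e → a ∈ 𝓑.fib e → b ∈ 𝓑.fib e →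
      (∀ x, val a x = val b x) → a = b)
    (hval_sep : ∀ x y : X,
      (∀ (e : S) (b : A), e * e = e → b ∈ 𝓑.fib e → val b x = val b y) → x = y)
    (hval_pos : ∀ {s : S} {a : A}, a ∈ 𝓑.fib s →
      ∀ x, (val (star a * a) x).im = 0 ∧ 0 ≤ (val (star a * a) x).re)
    {s : S} {x : X} (hx : x ∈ 𝓑.U val (star s * s))
    {a : A} (ha : a ∈ 𝓑.fib s) (hapos : 0 < (val (star a * a) x).re) :
    -- every element of the fiber over the germ `[s,x]` is a unique scalar multiple of `[a,s,x]`
    (∀ (t : S) (b : A), b ∈ 𝓑.fib t →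
        (∃ e : S, e * e = e ∧ x ∈ 𝓑.U val e ∧ t * e = s * e) →
        ∃! lam : ℂ, germRelTrip 𝓑 val (b, t, x) (lam • a, s, x)) ∧
    -- the explicit formula for the scalar
    (∀ b : A, b ∈ 𝓑.fib s →
        germRelTrip 𝓑 val (b, s, x)
          ((val (star a * b) x / val (star a * a) x) • a, s, x)) ∧
    -- the scalar identification is isometric
    (∀ (b : A), b ∈ 𝓑.fib s → ∀ lam : ℂ,
        germRelTrip 𝓑 val (b, s, x) (lam • a, s, x) →
        Real.sqrt (val (star b * b) x).re = ‖lam‖ * Real.sqrt (val (star a * a) x).re) := by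

  obtain ⟨b₀, hb₀, hv₀⟩ := hx
  have he : (star s * s) * (star s * s) = star s * s := isg_e_idem s
  have hmem_e : ∀ {c d : A}, c ∈ 𝓑.fib s → d ∈ 𝓑.fib s → star c * d ∈ 𝓑.fib (star s * s) :=
    fun hc hd => 𝓑.mul_mem (𝓑.star_mem hc) hd
  have hα : val (star a * a) x ≠ 0 := by
    intro h; rw [h] at hapos; simp at hapos
  have hconj_ne : ∀ {z : ℂ}, z ≠ 0 → (starRingEnd ℂ) z ≠ 0 := by
    intro z hz h
    exact hz (by simpa using congrArg (starRingEnd ℂ) h)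
  have val_sub : ∀ {e' : S} {m n : A}, e' * e' = e' → m ∈ 𝓑.fib e' → n ∈ 𝓑.fib e' → ∀ y,
      val (m - n) y = val m y - val n y := by
    intro e' m n he' hm hn y
    have h := hval_add he' (Submodule.sub_mem _ hm hn) hn y
    rw [sub_add_cancel] at h
    exact eq_sub_of_add_eq h.symm
  have keyval : ∀ {c d : A}, c ∈ 𝓑.fib s → d ∈ 𝓑.fib s → ∀ y,
      val (star c * c) y * val (star d * d) y
        = val (star c * d) y * (starRingEnd ℂ) (val (star c * d) y) := by
    intro c d hc hd y
    have h1 := hval_mul he he (hmem_e hc hc) (hmem_e hd hd) y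
    have h2 := hval_mul he he (hmem_e hc hd) (hmem_e hd hc) y
    have h3 : val (star d * c) y = (starRingEnd ℂ) (val (star c * d) y) := by
      have h := hval_star he (hmem_e hc hd) y
      rwa [star_mul, star_star] at h
    rw [← h1, key_lemma 𝓑 hsab hc hd, h2, h3]
  have hvanish : ∀ {C : A}, C ∈ 𝓑.fib s → val (star C * C) x = 0 → ∀ {D : A}, D ∈ 𝓑.fib s →
      val (star D * C) x = 0 := by
    intro C hC h0 D hD
    have hk := keyval hD hC x
    rw [h0, mul_zero] at hk
    rw [Complex.mul_conj] at hk
    exact Complex.normSq_eq_zero.mp (by exact_mod_cast hk.symm)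
  have hexpand : ∀ {P Q : A}, P ∈ 𝓑.fib s → Q ∈ 𝓑.fib s → ∀ (lam : ℂ) (y : X),
      val (star (Q - lam • P) * (Q - lam • P)) y
        = val (star Q * Q) y - lam * (starRingEnd ℂ) (val (star P * Q) y)
          - (starRingEnd ℂ) lam * val (star P * Q) y
          + (starRingEnd ℂ) lam * lam * val (star P * P) y := by
    intro P Q hP hQ lam y
    have mG1 : star Q * Q ∈ 𝓑.fib (star s * s) := hmem_e hQ hQ
    have mG2 : star Q * P ∈ 𝓑.fib (star s * s) := hmem_e hQ hP
    have mG3 : star P * Q ∈ 𝓑.fib (star s * s) := hmem_e hP hQ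
    have mG4 : star P * P ∈ 𝓑.fib (star s * s) := hmem_e hP hP
    have halg : star (Q - lam • P) * (Q - lam • P)
        = (star Q * Q - lam • (star Q * P))
          - ((starRingEnd ℂ) lam • (star P * Q) - ((starRingEnd ℂ) lam * lam) • (star P * P)) := by
      rw [star_sub, star_smul, starRingEnd_apply]
      simp only [sub_mul, mul_sub, smul_mul_assoc, mul_smul_comm, smul_smul, smul_sub]
      module
    rw [halg,
      val_sub he (Submodule.sub_mem _ mG1 (Submodule.smul_mem _ _ mG2))
        (Submodule.sub_mem _ (Submodule.smul_mem _ _ mG3) (Submodule.smul_mem _ _ mG4)) y,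
      val_sub he mG1 (Submodule.smul_mem _ _ mG2) y,
      val_sub he (Submodule.smul_mem _ _ mG3) (Submodule.smul_mem _ _ mG4) y,
      hval_smul lam he mG2 y, hval_smul ((starRingEnd ℂ) lam) he mG3 y,
      hval_smul ((starRingEnd ℂ) lam * lam) he mG4 y]
    have hstar : val (star Q * P) y = (starRingEnd ℂ) (val (star P * Q) y) := by
      have h := hval_star he mG3 y
      rwa [star_mul, star_star] at h
    rw [hstar]; ring
  have hzero : ∀ {P Q : A}, P ∈ 𝓑.fib s → Q ∈ 𝓑.fib s → val (star P * P) x ≠ 0 →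
      val (star (Q - (val (star P * Q) x / val (star P * P) x) • P) *
        (Q - (val (star P * Q) x / val (star P * P) x) • P)) x = 0 := by
    intro P Q hP hQ hν
    have hkey := keyval hP hQ x
    have hconjν : (starRingEnd ℂ) (val (star P * P) x) = val (star P * P) x :=
      Complex.conj_eq_iff_im.mpr (hval_pos hP x).1
    rw [hexpand hP hQ (val (star P * Q) x / val (star P * P) x) x, map_div₀, hconjν]
    have hδeq : val (star Q * Q) x
        = val (star P * Q) x * (starRingEnd ℂ) (val (star P * Q) x) / val (star P * P) x := by
      rw [eq_div_iff hν]; linear_combination hkey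
    rw [hδeq]
    field_simp
    ring
  have hconj_mul : ∀ {c : A}, c ∈ 𝓑.fib s → ∀ {e' : S} {b' : A}, e' * e' = e' → b' ∈ 𝓑.fib e' →
      val (star (c * b') * (c * b')) x
        = (starRingEnd ℂ) (val b' x) * (val (star c * c) x * val b' x) := by
    intro c hc e' b' he' hb'
    have hse' : star e' * star e' = star e' := by rw [← isg_star_mul, he']
    have hmid : ((star s * s) * e') * ((star s * s) * e') = (star s * s) * e' :=
      isg_idem_mul he he'
    have halg : star (c * b') * (c * b') = star b' * ((star c * c) * b') := by
      rw [star_mul]; simp only [mul_assoc]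
    have h1 : val ((star c * c) * b') x = val (star c * c) x * val b' x :=
      hval_mul he he' (hmem_e hc hc) hb' x
    have h2 := hval_mul hse' hmid (𝓑.star_mem hb') (𝓑.mul_mem (hmem_e hc hc) hb') x
    have h3 : val (star b') x = (starRingEnd ℂ) (val b' x) := hval_star he' hb' x
    rw [halg, h2, h3, h1]
  have hpair : ∀ {t : S} {b : A}, b ∈ 𝓑.fib t → ∀ (lam : ℂ) {E : S} {w : A}, E * E = E →
      w ∈ 𝓑.fib E → t * E = s * E →
      val (star (b * w - (lam • a) * w) * (b * w - (lam • a) * w)) x = 0 →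
      val (star a * (b * w)) x = lam * (val (star a * a) x * val w x) := by
    intro t b hb lam E w hE hw htE h0
    have hB : b * w ∈ 𝓑.fib s := by
      have h := 𝓑.mul_mem hb hw
      rw [htE] at h
      exact 𝓑.incl (isg_isle s E hE) h
    have hA2 : a * w ∈ 𝓑.fib s := 𝓑.incl (isg_isle s E hE) (𝓑.mul_mem ha hw)
    have hC : b * w - (lam • a) * w ∈ 𝓑.fib s := by
      refine Submodule.sub_mem _ hB ?_
      rw [smul_mul_assoc]; exact Submodule.smul_mem _ _ hA2
    have hac := hvanish hC h0 ha
    have hsplit : star a * (b * w - (lam • a) * w)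
        = star a * (b * w) - lam • (star a * (a * w)) := by
      rw [mul_sub, smul_mul_assoc, mul_smul_comm]
    rw [hsplit,
      val_sub he (hmem_e ha hB) (Submodule.smul_mem _ _ (hmem_e ha hA2)) x,
      hval_smul lam he (hmem_e ha hA2) x] at hac
    have h2 : val (star a * (a * w)) x = val (star a * a) x * val w x := by
      rw [← mul_assoc]; exact hval_mul he hE (hmem_e ha ha) hw x
    rw [h2] at hac
    exact sub_eq_zero.mp hac
  refine ⟨?_, ?_, ?_⟩
  · -- part 1: existence and uniqueness
    intro t b hb hger
    obtain ⟨e₁, he₁, hxe₁, hte₁⟩ := hger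
    obtain ⟨b₁, hb₁, hv₁⟩ := hxe₁
    have hE : (e₁ * (star s * s)) * (e₁ * (star s * s)) = e₁ * (star s * s) :=
      isg_idem_mul he₁ he
    have htE : t * (e₁ * (star s * s)) = s * (e₁ * (star s * s)) := by
      rw [← mul_assoc, hte₁, mul_assoc]
    have hw : b₁ * b₀ ∈ 𝓑.fib (e₁ * (star s * s)) := 𝓑.mul_mem hb₁ hb₀
    have hvwne : val (b₁ * b₀) x ≠ 0 := by
      rw [hval_mul he₁ he hb₁ hb₀ x]; exact mul_ne_zero hv₁ hv₀
    have hA2 : a * (b₁ * b₀) ∈ 𝓑.fib s :=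
      𝓑.incl (isg_isle s _ hE) (𝓑.mul_mem ha hw)
    have hB : b * (b₁ * b₀) ∈ 𝓑.fib s := by
      have h := 𝓑.mul_mem hb hw
      rw [htE] at h
      exact 𝓑.incl (isg_isle s _ hE) h
    have hν : val (star (a * (b₁ * b₀)) * (a * (b₁ * b₀))) x ≠ 0 := by
      rw [hconj_mul ha hE hw]
      exact mul_ne_zero (hconj_ne hvwne) (mul_ne_zero hα hvwne)
    have hrel₀ : germRelTrip 𝓑 val (b, t, x)
        ((val (star (a * (b₁ * b₀)) * (b * (b₁ * b₀))) x /
          val (star (a * (b₁ * b₀)) * (a * (b₁ * b₀))) x) • a, s, x) := by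
      refine ⟨rfl, e₁ * (star s * s), b₁ * b₀, hE, hw, hvwne, htE, ?_⟩
      rw [smul_mul_assoc]
      exact hzero hA2 hB hν
    have huniq : ∀ lam₁ lam₂ : ℂ, germRelTrip 𝓑 val (b, t, x) (lam₁ • a, s, x) →
        germRelTrip 𝓑 val (b, t, x) (lam₂ • a, s, x) → lam₁ = lam₂ := by
      intro lam₁ lam₂ h₁ h₂
      obtain ⟨-, E₁, w₁, hE₁, hw₁, hvw₁, ht₁, hz₁⟩ := h₁
      obtain ⟨-, E₂, w₂, hE₂, hw₂, hvw₂, ht₂, hz₂⟩ := h₂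
      have hstep : ∀ (lam : ℂ) (E : S) (w : A), E * E = E → w ∈ 𝓑.fib E → t * E = s * E →
          val (star (b * w - (lam • a) * w) * (b * w - (lam • a) * w)) x = 0 →
          ∀ (E' : S) (w' : A), E' * E' = E' → w' ∈ 𝓑.fib E' →
          val (star (b * (w * w') - (lam • a) * (w * w')) *
            (b * (w * w') - (lam • a) * (w * w'))) x = 0 := by
        intro lam E w hE hw htE hz E' w' hE' hw'
        have hC : b * w - (lam • a) * w ∈ 𝓑.fib s := by
          refine Submodule.sub_mem _ ?_ ?_
          · have h := 𝓑.mul_mem hb hw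
            rw [htE] at h
            exact 𝓑.incl (isg_isle s E hE) h
          · rw [smul_mul_assoc]
            exact Submodule.smul_mem _ _ (𝓑.incl (isg_isle s E hE) (𝓑.mul_mem ha hw))
        have heq : b * (w * w') - (lam • a) * (w * w') = (b * w - (lam • a) * w) * w' := by
          simp only [sub_mul, mul_assoc]
        rw [heq, hconj_mul hC hE' hw', hz, zero_mul, mul_zero]
      have hE₁₂ : (E₁ * E₂) * (E₁ * E₂) = E₁ * E₂ := isg_idem_mul hE₁ hE₂
      have hE₂₁ : (E₂ * E₁) * (E₂ * E₁) = E₂ * E₁ := isg_idem_mul hE₂ hE₁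
      have ht₁₂ : t * (E₁ * E₂) = s * (E₁ * E₂) := by rw [← mul_assoc, ht₁, mul_assoc]
      have ht₂₁ : t * (E₂ * E₁) = s * (E₂ * E₁) := by rw [← mul_assoc, ht₂, mul_assoc]
      have hw₁₂ : w₁ * w₂ ∈ 𝓑.fib (E₁ * E₂) := 𝓑.mul_mem hw₁ hw₂
      have hw₂₁ : w₂ * w₁ ∈ 𝓑.fib (E₂ * E₁) := 𝓑.mul_mem hw₂ hw₁
      have z₁ := hstep lam₁ E₁ w₁ hE₁ hw₁ ht₁ hz₁ E₂ w₂ hE₂ hw₂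
      have z₂ := hstep lam₂ E₂ w₂ hE₂ hw₂ ht₂ hz₂ E₁ w₁ hE₁ hw₁
      have Z₁ := hstep lam₁ (E₁ * E₂) (w₁ * w₂) hE₁₂ hw₁₂ ht₁₂ z₁ (E₂ * E₁) (w₂ * w₁) hE₂₁ hw₂₁
      have Z₂ := hstep lam₂ (E₂ * E₁) (w₂ * w₁) hE₂₁ hw₂₁ ht₂₁ z₂ (E₁ * E₂) (w₁ * w₂) hE₁₂ hw₁₂
      have hcommw : (w₂ * w₁) * (w₁ * w₂) = (w₁ * w₂) * (w₂ * w₁) := by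
        have hw₂₁' : w₂ * w₁ ∈ 𝓑.fib (E₁ * E₂) := by
          rw [InverseSemigroup.idem_comm E₂ E₁ hE₂ hE₁] at hw₂₁
          exact hw₂₁
        exact hsab (E₁ * E₂) hE₁₂ _ _ hw₂₁' hw₁₂
      rw [hcommw] at Z₂
      have hEW : ((E₁ * E₂) * (E₂ * E₁)) * ((E₁ * E₂) * (E₂ * E₁)) = (E₁ * E₂) * (E₂ * E₁) :=
        isg_idem_mul hE₁₂ hE₂₁
      have hWmem : (w₁ * w₂) * (w₂ * w₁) ∈ 𝓑.fib ((E₁ * E₂) * (E₂ * E₁)) :=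
        𝓑.mul_mem hw₁₂ hw₂₁
      have htEW : t * ((E₁ * E₂) * (E₂ * E₁)) = s * ((E₁ * E₂) * (E₂ * E₁)) := by
        rw [← mul_assoc, ht₁₂, mul_assoc]
      have hp₁ := hpair hb lam₁ hEW hWmem htEW Z₁
      have hp₂ := hpair hb lam₂ hEW hWmem htEW Z₂
      have hvW : val ((w₁ * w₂) * (w₂ * w₁)) x ≠ 0 := by
        rw [hval_mul hE₁₂ hE₂₁ hw₁₂ hw₂₁ x, hval_mul hE₁ hE₂ hw₁ hw₂ x,
          hval_mul hE₂ hE₁ hw₂ hw₁ x]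
        exact mul_ne_zero (mul_ne_zero hvw₁ hvw₂) (mul_ne_zero hvw₂ hvw₁)
      exact mul_right_cancel₀ (mul_ne_zero hα hvW) (hp₁.symm.trans hp₂)
    exact ⟨_, hrel₀, fun y hy => huniq y _ hy hrel₀⟩
  · -- part 2: the explicit formula
    intro b hb
    have hcmem : b - (val (star a * b) x / val (star a * a) x) • a ∈ 𝓑.fib s :=
      Submodule.sub_mem _ hb (Submodule.smul_mem _ _ ha)
    refine ⟨rfl, star s * s, b₀, he, hb₀, hv₀, rfl, ?_⟩
    have heq : b * b₀ - ((val (star a * b) x / val (star a * a) x) • a) * b₀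
        = (b - (val (star a * b) x / val (star a * a) x) • a) * b₀ := (sub_mul _ _ _).symm
    rw [heq, hconj_mul hcmem he hb₀, hzero ha hb hα, zero_mul, mul_zero]
  · -- part 3: isometry
    intro b hb lam hrel
    obtain ⟨-, E', w', hE', hw', hv', -, hz⟩ := hrel
    have hcmem : b - lam • a ∈ 𝓑.fib s :=
      Submodule.sub_mem _ hb (Submodule.smul_mem _ _ ha)
    have heq : b * w' - (lam • a) * w' = (b - lam • a) * w' := (sub_mul _ _ _).symm
    rw [heq, hconj_mul hcmem hE' hw'] at hz
    have hcc : val (star (b - lam • a) * (b - lam • a)) x = 0 := by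
      rcases mul_eq_zero.mp hz with h | h
      · exact absurd h (hconj_ne hv')
      · rcases mul_eq_zero.mp h with h' | h'
        · exact h'
        · exact absurd h' hv'
    have hac : val (star a * (b - lam • a)) x = 0 := hvanish hcmem hcc ha
    have hsplit : star a * (b - lam • a) = star a * b - lam • (star a * a) := by
      rw [mul_sub, mul_smul_comm]
    rw [hsplit,
      val_sub he (hmem_e ha hb) (Submodule.smul_mem _ _ (hmem_e ha ha)) x,
      hval_smul lam he (hmem_e ha ha) x] at hac
    have hβ : val (star a * b) x = lam * val (star a * a) x := sub_eq_zero.mp hac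
    have hδ := hexpand ha hb lam x
    rw [hcc] at hδ
    have hconjα : (starRingEnd ℂ) (val (star a * a) x) = val (star a * a) x :=
      Complex.conj_eq_iff_im.mpr (hval_pos ha x).1
    have hconjβ : (starRingEnd ℂ) (val (star a * b) x)
        = (starRingEnd ℂ) lam * val (star a * a) x := by
      rw [hβ, map_mul, hconjα]
    have hδ2 : val (star b * b) x = lam * (starRingEnd ℂ) lam * val (star a * a) x := by
      linear_combination -hδ + (starRingEnd ℂ) lam * hβ + lam * hconjβ
    have hre : (val (star b * b) x).re = Complex.normSq lam * (val (star a * a) x).re := by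
      rw [hδ2, show lam * (starRingEnd ℂ) lam = (Complex.normSq lam : ℂ) from
        Complex.mul_conj lam]
      simp [Complex.mul_re]
    rw [hre, Real.sqrt_mul (Complex.normSq_nonneg lam),
      show Real.sqrt (Complex.normSq lam) = ‖lam‖ from by
        rw [Complex.norm_def]]
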